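/- arXiv:0810.5595 — 5 statements merged into one kernel-verified Lean document; each statement's English description precedes it below -/
import Mathlib

section
/- Given nonzero integers a and b, there exists an infinite set S of prime numbers such that: every p ∈ S satisfies p ≡ 1 (mod 4), p does not divide a·b, and a + b·p² ≠ 0; and for all p, q ∈ S with p ≠ q, the rational number (a + b·p²)/(a + b·q²) is not the square of any rational number. -/
lemma aux_ratio_not_square {Np Nq : ℤ} {ℓ : ℕ} (hℓ : ℓ.Prime)
    (h1 : (ℓ:ℤ) ∣ Np) (h2 : ¬ (ℓ:ℤ)^2 ∣ Np) (h3 : ¬ (ℓ:ℤ) ∣ Nq) (hNq : Nq ≠ 0) :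
    ¬ ∃ w : ℚ, (Np : ℚ) / (Nq : ℚ) = w ^ 2 := by
  rintro ⟨w, hw⟩
  have hpZ : Prime (ℓ : ℤ) := Nat.prime_iff_prime_int.mp hℓ
  have hqQ : (Nq : ℚ) ≠ 0 := Int.cast_ne_zero.2 hNq
  have hden : ((w.den : ℚ)) ≠ 0 := by exact_mod_cast w.den_ne_zero
  have key : Np * (w.den : ℤ)^2 = w.num^2 * Nq := by
    have h : (Np : ℚ) = w^2 * Nq := by
      field_simp at hw; linarith [hw]
    have hwd : (w.num : ℚ) = w * w.den := by
      exact (div_eq_iff hden).mp (Rat.num_div_den w)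
    have h2' : (Np : ℚ) * (w.den : ℚ)^2 = (w.num : ℚ)^2 * (Nq : ℚ) := by
      rw [h, hwd]; ring
    exact_mod_cast h2'
  have hm : (ℓ:ℤ) ∣ w.num := by
    have : (ℓ:ℤ) ∣ w.num^2 * Nq := key ▸ Dvd.dvd.mul_right h1 _
    rcases hpZ.dvd_mul.1 this with h | h
    · exact hpZ.dvd_of_dvd_pow h
    · exact absurd h h3
  have hnd : ¬ (ℓ:ℤ) ∣ (w.den : ℤ) := by
    intro hd
    have h1' : ℓ ∣ w.num.natAbs := by
      rw [← Int.natAbs_natCast ℓ]; exact Int.natAbs_dvd_natAbs.mpr hm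
    have h2' : ℓ ∣ w.den := Int.ofNat_dvd.mp hd
    have : ℓ ∣ 1 := w.reduced ▸ Nat.dvd_gcd h1' h2'
    exact hℓ.one_lt.ne' (Nat.dvd_one.mp this)
  have hsq : (ℓ:ℤ)^2 ∣ Np * (w.den:ℤ)^2 := by
    rw [key]
    exact dvd_mul_of_dvd_left (pow_dvd_pow_of_dvd hm 2) _
  have hcop : IsCoprime ((ℓ:ℤ)^2) ((w.den:ℤ)^2) :=
    (hpZ.coprime_iff_not_dvd.2 hnd).pow
  exact h2 (hcop.dvd_of_dvd_mul_right hsq)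

lemma aux_ratio_not_square_swap {Np Nq : ℤ} {ℓ : ℕ} (hℓ : ℓ.Prime)
    (h1 : (ℓ:ℤ) ∣ Np) (h2 : ¬ (ℓ:ℤ)^2 ∣ Np) (h3 : ¬ (ℓ:ℤ) ∣ Nq) (hNq : Nq ≠ 0) :
    ¬ ∃ w : ℚ, (Nq : ℚ) / (Np : ℚ) = w ^ 2 := by
  rintro ⟨w, hw⟩
  have hNp : Np ≠ 0 := by
    intro h
    exact h2 (h ▸ dvd_zero _)
  have hPQ : (Np : ℚ) ≠ 0 := Int.cast_ne_zero.2 hNp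
  have hQQ : (Nq : ℚ) ≠ 0 := Int.cast_ne_zero.2 hNq
  have hwne : w ≠ 0 := by
    intro h
    rw [h] at hw
    simp at hw
    rcases hw with h' | h'
    · exact hQQ (by exact_mod_cast h')
    · exact hPQ (by exact_mod_cast h')
  apply aux_ratio_not_square hℓ h1 h2 h3 hNq
  refine ⟨w⁻¹, ?_⟩
  rw [inv_pow, ← hw]
  field_simp

lemma aux_exists_ell (c : ℤ) (hc : c ≠ 0) (M : ℕ) :
    ∃ ℓ x : ℕ, ℓ.Prime ∧ M < ℓ ∧ ℓ ≠ 2 ∧ ¬ (ℓ:ℤ) ∣ c ∧ (ℓ:ℤ) ∣ ((x:ℤ)^2 + c) := by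
  set M' := max M 2 with hM'
  set t : ℕ := M'.factorial with ht
  have ht2 : 2 ≤ t := by
    calc 2 = Nat.factorial 2 := rfl
    _ ≤ t := Nat.factorial_le (le_max_right M 2)
  set N : ℤ := c * (t:ℤ)^2 + 1 with hN
  have hc1 : 1 ≤ |c| := Int.one_le_abs hc
  have habs : (3:ℤ) ≤ |N| := by
    have h1 : |c * (t:ℤ)^2| = |c| * (t:ℤ)^2 := by
      rw [abs_mul, abs_pow, Int.abs_natCast]
    have h2 : (4:ℤ) ≤ |c| * (t:ℤ)^2 := by
      have : (4:ℤ) ≤ (t:ℤ)^2 := by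
        have : (2:ℤ) ≤ (t:ℤ) := by exact_mod_cast ht2
        nlinarith
      nlinarith
    have h3 : |c * (t:ℤ)^2| ≤ |N| + 1 := by
      calc |c * (t:ℤ)^2| = |N + (-1)| := by congr 1; rw [hN]; ring
      _ ≤ |N| + |(-1:ℤ)| := abs_add_le _ _
      _ = |N| + 1 := by norm_num
    omega
  have hNa : 1 < N.natAbs := by
    have : (3:ℤ) ≤ (N.natAbs : ℤ) := by rwa [Int.abs_eq_natAbs] at habs
    omega
  set ℓ := N.natAbs.minFac with hℓdef
  have hℓp : ℓ.Prime := Nat.minFac_prime (by omega)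
  have hℓN : (ℓ:ℤ) ∣ N := by
    have : ℓ ∣ N.natAbs := Nat.minFac_dvd _
    exact dvd_trans (Int.ofNat_dvd.mpr this) (Int.natAbs_dvd.mpr dvd_rfl)
  have hℓt : ¬ ℓ ∣ t := by
    intro hd
    have : (ℓ:ℤ) ∣ c * (t:ℤ)^2 := by
      exact Dvd.dvd.mul_left (dvd_pow (Int.ofNat_dvd.mpr hd) (by norm_num)) c
    have h1 : (ℓ:ℤ) ∣ 1 := by
      have := dvd_sub hℓN this
      simpa [hN] using this
    have := Int.le_of_dvd one_pos h1
    have := hℓp.one_lt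
    omega
  have hℓM : M < ℓ := by
    by_contra h
    push_neg at h
    exact hℓt (Nat.dvd_factorial hℓp.pos (le_trans h (le_max_left M 2)))
  have hℓ2 : ℓ ≠ 2 := by
    intro h
    exact hℓt (h ▸ Nat.dvd_factorial (by norm_num) (le_max_right M 2))
  have hℓc : ¬ (ℓ:ℤ) ∣ c := by
    intro hd
    have : (ℓ:ℤ) ∣ 1 := by
      have := dvd_sub hℓN (Dvd.dvd.mul_right hd ((t:ℤ)^2))
      simpa [hN] using this
    have := Int.le_of_dvd one_pos this
    have := hℓp.one_lt
    omega
  refine ⟨ℓ, c.natAbs * t, hℓp, hℓM, hℓ2, hℓc, ?_⟩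
  have : ((c.natAbs * t : ℕ) : ℤ)^2 + c = c * N := by
    push_cast
    rw [mul_pow, sq_abs, hN]
    ring
  rw [this]
  exact Dvd.dvd.mul_left hℓN c

lemma aux_good_residue {a b : ℤ} {ℓ x : ℕ}
    (hℓ : ℓ.Prime) (hodd : ℓ ≠ 2) (hab : ¬ (ℓ:ℤ) ∣ a*b) (hx : (ℓ:ℤ) ∣ (x:ℤ)^2 + a*b) :
    ∃ r : ℤ, ¬ (ℓ:ℤ) ∣ r ∧ (ℓ:ℤ) ∣ (a + b*r^2) ∧ ¬ (ℓ:ℤ)^2 ∣ (a + b*r^2) := by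
  haveI : Fact ℓ.Prime := ⟨hℓ⟩
  set A : ZMod ℓ := (a : ZMod ℓ) with hA
  set B : ZMod ℓ := (b : ZMod ℓ) with hB
  have hABne : A * B ≠ 0 := by
    intro h
    apply hab
    have : ((a*b : ℤ) : ZMod ℓ) = 0 := by push_cast; exact h
    exact (ZMod.intCast_zmod_eq_zero_iff_dvd _ _).mp this
  have hAne : A ≠ 0 := fun h => hABne (by rw [h, zero_mul])
  have hBne : B ≠ 0 := fun h => hABne (by rw [h, mul_zero])
  set u : ZMod ℓ := ((x:ℤ) : ZMod ℓ) with hudef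
  have hu : u^2 + A * B = 0 := by
    have h0 : (((x:ℤ)^2 + a*b : ℤ) : ZMod ℓ) = 0 := (ZMod.intCast_zmod_eq_zero_iff_dvd _ _).mpr hx
    rw [hudef, hA, hB, ← h0]
    push_cast
    ring
  have hune : u ≠ 0 := by
    intro h
    rw [h] at hu
    simp at hu
    rcases hu with h' | h'
    · exact hAne h'
    · exact hBne h'
  set ρ : ZMod ℓ := u * B⁻¹ with hρ
  have hρne : ρ ≠ 0 := mul_ne_zero hune (inv_ne_zero hBne)
  have hu2 : u^2 = -(A*B) := eq_neg_of_add_eq_zero_left hu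
  have hroot : A + B * ρ^2 = 0 := by
    have h1 : B * ρ^2 = u^2 * B⁻¹ := by
      rw [hρ]
      linear_combination (u^2 * B⁻¹) * mul_inv_cancel₀ hBne
    rw [h1, hu2]
    field_simp
    ring
  -- lift ρ to ℤ
  set r₀ : ℤ := (ρ.val : ℤ) with hr₀
  have hr₀cast : ((r₀ : ℤ) : ZMod ℓ) = ρ := by
    simp [hr₀, ZMod.natCast_val, ZMod.cast_id]
  have hdvd0 : (ℓ:ℤ) ∣ (a + b * r₀^2) := by
    rw [← ZMod.intCast_zmod_eq_zero_iff_dvd]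
    push_cast
    rw [hr₀cast]
    exact_mod_cast hroot
  obtain ⟨m, hm⟩ := hdvd0
  -- choose t with  m + 2*b*r₀*t ≢ 0 mod ℓ
  have h2Bρ : (2:ZMod ℓ) * B * ρ ≠ 0 := by
    have h2 : (2 : ZMod ℓ) ≠ 0 := by
      have : ((2:ℕ) : ZMod ℓ) ≠ 0 := by
        rw [Ne, ZMod.natCast_eq_zero_iff]
        intro h
        exact hodd ((Nat.prime_dvd_prime_iff_eq hℓ Nat.prime_two).mp h)
      exact_mod_cast this
    exact mul_ne_zero (mul_ne_zero h2 hBne) hρne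
  set τ : ZMod ℓ := (1 - (m : ZMod ℓ)) * ((2:ZMod ℓ) * B * ρ)⁻¹ with hτ
  set t : ℤ := (τ.val : ℤ) with htdef
  have htcast : ((t : ℤ) : ZMod ℓ) = τ := by
    simp [htdef, ZMod.natCast_val, ZMod.cast_id]
  have hkey : ((m + 2*b*r₀*t : ℤ) : ZMod ℓ) = 1 := by
    push_cast
    rw [hr₀cast, htcast, hτ]
    have hinv := mul_inv_cancel₀ h2Bρ
    rw [hB] at hinv ⊢
    linear_combination (1 - (m : ZMod ℓ)) * hinv
  refine ⟨r₀ + t * ℓ, ?_, ?_, ?_⟩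
  · intro hd
    apply hρne
    rw [← hr₀cast]
    have : ((r₀ + t*ℓ : ℤ) : ZMod ℓ) = 0 := (ZMod.intCast_zmod_eq_zero_iff_dvd _ _).mpr hd
    push_cast at this
    simpa using this
  · have : a + b*(r₀ + t*ℓ)^2 = (ℓ:ℤ) * (m + 2*b*r₀*t + b*t^2*ℓ) := by
      rw [show (ℓ:ℤ) * (m + 2*b*r₀*t + b*t^2*ℓ) = (ℓ:ℤ)*m + (2*b*r₀*t + b*t^2*(ℓ:ℤ))*ℓ by ring, ← hm]
      ring
    rw [this]
    exact Dvd.intro _ rfl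
  · intro hd
    have heq : a + b*(r₀ + t*ℓ)^2 = (ℓ:ℤ) * (m + 2*b*r₀*t + b*t^2*ℓ) := by
      rw [show (ℓ:ℤ) * (m + 2*b*r₀*t + b*t^2*ℓ) = (ℓ:ℤ)*m + (2*b*r₀*t + b*t^2*(ℓ:ℤ))*ℓ by ring, ← hm]
      ring
    rw [heq, pow_two] at hd
    have hℓne : (ℓ:ℤ) ≠ 0 := by exact_mod_cast hℓ.pos.ne'
    have hd2 : (ℓ:ℤ) ∣ (m + 2*b*r₀*t + b*t^2*ℓ) := (mul_dvd_mul_iff_left hℓne).mp hd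
    have hd3 : (ℓ:ℤ) ∣ (m + 2*b*r₀*t) := by
      have := dvd_sub hd2 (Dvd.dvd.mul_left (dvd_refl (ℓ:ℤ)) (b*t^2))
      simpa using this
    have : ((m + 2*b*r₀*t : ℤ) : ZMod ℓ) = 0 := (ZMod.intCast_zmod_eq_zero_iff_dvd _ _).mpr hd3
    rw [hkey] at this
    exact one_ne_zero this
lemma aux_exists_next (a b : ℤ) (ha : a ≠ 0) (hb : b ≠ 0) (M : ℕ) :
    ∃ p ℓ : ℕ, M < p ∧ p.Prime ∧ p % 4 = 1 ∧ ¬ (p:ℤ) ∣ a*b ∧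
      ℓ.Prime ∧ M < ℓ ∧ (ℓ:ℤ) ∣ (a + b*(p:ℤ)^2) ∧ ¬ (ℓ:ℤ)^2 ∣ (a + b*(p:ℤ)^2) := by
  obtain ⟨ℓ, x, hℓp, hℓM, hℓ2, hℓab, hℓx⟩ := aux_exists_ell (a*b) (mul_ne_zero ha hb) M
  obtain ⟨r, hr1, hr2, hr3⟩ := aux_good_residue hℓp hℓ2 hℓab hℓx
  set L : ℕ := ℓ^2 with hLdef
  have hLpos : 0 < L := pow_pos hℓp.pos 2
  have hLZ : ((L:ℕ):ℤ) = (ℓ:ℤ)^2 := by rw [hLdef]; push_cast; ring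
  set r' : ℕ := (r % (L:ℤ)).toNat with hr'def
  have hr'cast : ((r' : ℕ) : ℤ) = r % (L:ℤ) :=
    Int.toNat_of_nonneg (Int.emod_nonneg r (by exact_mod_cast hLpos.ne'))
  have hr'modeq : ((r' : ℕ) : ℤ) ≡ r [ZMOD (L:ℤ)] := by
    rw [hr'cast]
    exact (Int.emod_emod_of_dvd r dvd_rfl : r % (L:ℤ) % (L:ℤ) = r % (L:ℤ))
  have cop : Nat.Coprime 4 L := by
    have h2ℓ : Nat.Coprime 2 ℓ := (Nat.coprime_primes Nat.prime_two hℓp).mpr (Ne.symm hℓ2)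
    have h : Nat.Coprime (2^2) (ℓ^2) := Nat.Coprime.pow _ _ h2ℓ
    rw [hLdef]
    rwa [show (2:ℕ)^2 = 4 from rfl] at h
  obtain ⟨s, hs4, hsL⟩ := Nat.chineseRemainder cop 1 r'
  have hs4' : (s:ℕ) % 4 = 1 := by simpa [Nat.ModEq] using hs4
  have hℓr' : ¬ ℓ ∣ r' := by
    intro hd
    apply hr1
    have h1 : (ℓ:ℤ) ∣ ((r':ℕ):ℤ) := Int.ofNat_dvd.mpr hd
    rw [hr'cast] at h1
    have h2 : (ℓ:ℤ) ∣ (L:ℤ) := by rw [hLZ]; exact dvd_pow_self _ (by norm_num)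
    have h3 : (ℓ:ℤ) ∣ (L:ℤ) * (r / (L:ℤ)) := h2.mul_right _
    calc (ℓ:ℤ) ∣ r % (L:ℤ) + (L:ℤ) * (r / (L:ℤ)) := dvd_add h1 h3
    _ = r := Int.emod_add_mul_ediv r (L:ℤ)
  have hℓs : ¬ ℓ ∣ (s:ℕ) := by
    intro hd
    apply hℓr'
    have hmod : (s:ℕ) % L = r' % L := hsL
    have h2 : ℓ ∣ L := dvd_pow_self _ (by norm_num)
    have h3 : ℓ ∣ (s:ℕ) % L := (Nat.dvd_mod_iff h2).mpr hd
    rw [hmod] at h3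
    exact (Nat.dvd_mod_iff h2).mp h3
  have hcops : Nat.Coprime (s:ℕ) (4*L) := by
    rw [Nat.coprime_mul_iff_right]
    constructor
    · have h2s : ¬ 2 ∣ (s:ℕ) := by omega
      have : Nat.Coprime (s:ℕ) 2 := (Nat.prime_two.coprime_iff_not_dvd.mpr h2s).symm
      have h4 : Nat.Coprime (s:ℕ) (2^2) := this.pow_right 2
      simpa using h4
    · exact ((hℓp.coprime_iff_not_dvd.mpr hℓs).symm).pow_right 2
  haveI : NeZero (4*L) := ⟨by positivity⟩
  have hunit : IsUnit ((s:ℕ) : ZMod (4*L)) := (ZMod.isUnit_iff_coprime _ _).mpr hcops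
  obtain ⟨p, hpM, hpp, hps⟩ :=
    Nat.forall_exists_prime_gt_and_eq_mod hunit (max M (a*b).natAbs)
  have hpmod : p ≡ (s:ℕ) [MOD 4*L] := (ZMod.natCast_eq_natCast_iff _ _ _).mp hps
  have hp4 : p % 4 = 1 := by
    have h1 : p ≡ (s:ℕ) [MOD 4] := hpmod.of_dvd (dvd_mul_right 4 L)
    have : p % 4 = (s:ℕ) % 4 := h1
    omega
  have hpL : (p:ℤ) ≡ r [ZMOD (L:ℤ)] := by
    have h1 : p ≡ (s:ℕ) [MOD L] := hpmod.of_dvd (dvd_mul_left L 4)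
    have h2 : p ≡ r' [MOD L] := h1.trans hsL
    exact (Int.natCast_modEq_iff.mpr h2).trans hr'modeq
  have hpL' : (p:ℤ) ≡ r [ZMOD (ℓ:ℤ)^2] := by rwa [hLZ] at hpL
  have hcong : a + b*(p:ℤ)^2 ≡ a + b*r^2 [ZMOD (ℓ:ℤ)^2] :=
    (Int.ModEq.refl a).add ((Int.ModEq.refl b).mul (hpL'.pow 2))
  have hdiff : ((ℓ:ℤ)^2) ∣ ((a + b*r^2) - (a + b*(p:ℤ)^2)) := hcong.dvd
  refine ⟨p, ℓ, lt_of_le_of_lt (le_max_left _ _) hpM, hpp, hp4, ?_, hℓp, hℓM, ?_, ?_⟩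
  · intro hd
    have h1 : p ∣ (a*b).natAbs := by
      rw [← Int.natAbs_natCast p]
      exact Int.natAbs_dvd_natAbs.mpr hd
    have h2 : 0 < (a*b).natAbs := Int.natAbs_pos.mpr (mul_ne_zero ha hb)
    have h3 := Nat.le_of_dvd h2 h1
    have h4 : (a*b).natAbs < p := lt_of_le_of_lt (le_max_right _ _) hpM
    omega
  · have h1 : (ℓ:ℤ) ∣ ((a + b*r^2) - (a + b*(p:ℤ)^2)) :=
      (dvd_pow_self (ℓ:ℤ) (two_ne_zero)).trans hdiff
    have h2 := dvd_sub hr2 h1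
    have h3 : a + b*r^2 - ((a + b*r^2) - (a + b*(p:ℤ)^2)) = a + b*(p:ℤ)^2 := by ring
    rwa [h3] at h2
  · intro hd
    apply hr3
    have h2 := dvd_add hdiff hd
    have h3 : (a + b*r^2) - (a + b*(p:ℤ)^2) + (a + b*(p:ℤ)^2) = a + b*r^2 := by ring
    rwa [h3] at h2

noncomputable def auxNext (a b : ℤ) (ha : a ≠ 0) (hb : b ≠ 0) (M : ℕ) : ℕ :=
  (aux_exists_next a b ha hb M).choose

lemma auxNext_spec (a b : ℤ) (ha : a ≠ 0) (hb : b ≠ 0) (M : ℕ) :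
    M < auxNext a b ha hb M ∧ (auxNext a b ha hb M).Prime ∧
    (auxNext a b ha hb M) % 4 = 1 ∧ ¬ ((auxNext a b ha hb M : ℤ)) ∣ a*b ∧
    ∃ ℓ : ℕ, ℓ.Prime ∧ M < ℓ ∧ (ℓ:ℤ) ∣ (a + b*(auxNext a b ha hb M : ℤ)^2) ∧
      ¬ (ℓ:ℤ)^2 ∣ (a + b*(auxNext a b ha hb M : ℤ)^2) := by
  obtain ⟨ℓ, h1, h2, h3, h4, h5, h6, h7, h8⟩ := (aux_exists_next a b ha hb M).choose_spec
  exact ⟨h1, h2, h3, h4, ℓ, h5, h6, h7, h8⟩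

noncomputable def auxSeq (a b : ℤ) (ha : a ≠ 0) (hb : b ≠ 0) : ℕ → ℕ
  | 0 => auxNext a b ha hb 0
  | n+1 => auxNext a b ha hb
      (auxSeq a b ha hb n + a.natAbs + b.natAbs * (auxSeq a b ha hb n)^2)

/-- **Theorem (constructive infinite set of primes).**
Given nonzero integers `a` and `b`, there is an infinite set `S` of prime numbers such
that every `p ∈ S` satisfies `p ≡ 1 (mod 4)`, `p ∤ a·b` and `a + b·p² ≠ 0`, and for all
distinct `p, q ∈ S` the rational number `(a + b·p²)/(a + b·q²)` is not a square in `ℚ`. -/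
theorem infinite_prime_set_nonsquare_ratios (a b : ℤ) (ha : a ≠ 0) (hb : b ≠ 0) :
    ∃ S : Set ℕ, S.Infinite ∧
      (∀ p ∈ S, Nat.Prime p ∧ p % 4 = 1 ∧ ¬ ((p : ℤ) ∣ a * b) ∧ a + b * (p : ℤ) ^ 2 ≠ 0) ∧
      (∀ p ∈ S, ∀ q ∈ S, p ≠ q →
        ¬ ∃ w : ℚ, ((a : ℚ) + (b : ℚ) * (p : ℚ) ^ 2) / ((a : ℚ) + (b : ℚ) * (q : ℚ) ^ 2)
          = w ^ 2) := by
  set f := auxSeq a b ha hb with hf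
  have hstep : ∀ n, f n < f (n+1) := by
    intro n
    have h := (auxNext_spec a b ha hb (f n + a.natAbs + b.natAbs * (f n)^2)).1
    calc f n ≤ f n + a.natAbs + b.natAbs * (f n)^2 := by omega
    _ < f (n+1) := h
  have hmono : StrictMono f := strictMono_nat_of_lt_succ hstep
  have hspec : ∀ n, ∃ M : ℕ, f n = auxNext a b ha hb M ∧
      (∀ j < n, f j + a.natAbs + b.natAbs * (f j)^2 ≤ M) := by
    intro n
    cases n with
    | zero => exact ⟨0, rfl, fun j hj => absurd hj (Nat.not_lt_zero j)⟩
    | succ k =>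
      refine ⟨f k + a.natAbs + b.natAbs * (f k)^2, rfl, ?_⟩
      intro j hj
      have hjk : f j ≤ f k := hmono.monotone (Nat.lt_succ_iff.mp hj)
      have hsq : (f j)^2 ≤ (f k)^2 := Nat.pow_le_pow_left hjk 2
      have : b.natAbs * (f j)^2 ≤ b.natAbs * (f k)^2 := Nat.mul_le_mul_left _ hsq
      omega
  have hprops : ∀ n, (f n).Prime ∧ (f n) % 4 = 1 ∧ ¬ ((f n : ℤ)) ∣ a*b := by
    intro n
    obtain ⟨M, hM, -⟩ := hspec n
    rw [hM]
    have h := auxNext_spec a b ha hb M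
    exact ⟨h.2.1, h.2.2.1, h.2.2.2.1⟩
  have hellraw : ∀ n, ∃ M ℓ, f n = auxNext a b ha hb M ∧
      (∀ j < n, f j + a.natAbs + b.natAbs * (f j)^2 ≤ M) ∧
      ℓ.Prime ∧ M < ℓ ∧ (ℓ:ℤ) ∣ (a + b*(f n : ℤ)^2) ∧ ¬ (ℓ:ℤ)^2 ∣ (a + b*(f n : ℤ)^2) := by
    intro n
    obtain ⟨M, hM, hMj⟩ := hspec n
    obtain ⟨ℓ, h5, h6, h7, h8⟩ := (auxNext_spec a b ha hb M).2.2.2.2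
    exact ⟨M, ℓ, hM, hMj, h5, h6, by rw [hM]; exact h7, by rw [hM]; exact h8⟩
  have hNz : ∀ n, a + b*(f n : ℤ)^2 ≠ 0 := by
    intro n h0
    obtain ⟨M, ℓ, -, -, -, -, -, h8⟩ := hellraw n
    exact h8 (h0 ▸ dvd_zero _)
  have habsbd : ∀ j : ℕ, |a + b*(f j : ℤ)^2| ≤ (a.natAbs : ℤ) + (b.natAbs:ℤ) * (f j : ℤ)^2 := by
    intro j
    calc |a + b*(f j : ℤ)^2| ≤ |a| + |b*(f j : ℤ)^2| := abs_add_le _ _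
    _ = |a| + |b| * (f j : ℤ)^2 := by
        rw [abs_mul, abs_pow, abs_of_nonneg (by positivity : (0:ℤ) ≤ (f j : ℤ))]
    _ = (a.natAbs : ℤ) + (b.natAbs:ℤ) * (f j : ℤ)^2 := by
        rw [Int.abs_eq_natAbs, Int.abs_eq_natAbs]
  have hell : ∀ n, ∃ ℓ : ℕ, ℓ.Prime ∧ (ℓ:ℤ) ∣ (a + b*(f n : ℤ)^2) ∧
      ¬ (ℓ:ℤ)^2 ∣ (a + b*(f n : ℤ)^2) ∧
      (∀ j < n, ¬ (ℓ:ℤ) ∣ (a + b*(f j : ℤ)^2)) := by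
    intro n
    obtain ⟨M, ℓ, hM, hMj, h5, h6, h7, h8⟩ := hellraw n
    refine ⟨ℓ, h5, h7, h8, ?_⟩
    intro j hj hdvd
    have hb1 : f j + a.natAbs + b.natAbs * (f j)^2 ≤ M := hMj j hj
    have hb2 : a.natAbs + b.natAbs * (f j)^2 < ℓ := by omega
    have hb3 : (a.natAbs : ℤ) + (b.natAbs:ℤ) * (f j : ℤ)^2 < (ℓ:ℤ) := by exact_mod_cast hb2
    have hle : (ℓ:ℤ) ≤ |a + b*(f j : ℤ)^2| :=
      Int.le_of_dvd (abs_pos.mpr (hNz j)) ((dvd_abs _ _).mpr hdvd)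
    have := habsbd j
    omega
  refine ⟨Set.range f, Set.infinite_range_of_injective hmono.injective, ?_, ?_⟩
  · rintro p ⟨n, rfl⟩
    exact ⟨(hprops n).1, (hprops n).2.1, (hprops n).2.2, hNz n⟩
  · rintro p ⟨i, rfl⟩ q ⟨j, rfl⟩ hne
    have hij : i ≠ j := fun h => hne (by rw [h])
    have hcast : ∀ n : ℕ, ((a:ℚ) + (b:ℚ) * ((f n : ℕ):ℚ)^2) = ((a + b*(f n : ℤ)^2 : ℤ) : ℚ) := by
      intro n; push_cast; ring
    rw [hcast i, hcast j]
    rcases Nat.lt_or_ge j i with h | h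
    · obtain ⟨ℓ, hℓp, h1, h2, h4⟩ := hell i
      exact aux_ratio_not_square hℓp h1 h2 (h4 j h) (hNz j)
    · have hji : i < j := lt_of_le_of_ne h hij
      obtain ⟨ℓ, hℓp, h1, h2, h4⟩ := hell j
      exact aux_ratio_not_square_swap hℓp h1 h2 (h4 i hji) (hNz i)
end

section
/- Let A be an integral domain that is a finitely generated ℤ-algebra, let x ∈ A be nonzero, and let p be a prime number such that x does not belong to the radical of the ideal pA. Then there exists a maximal ideal m of A such that p ∈ m and x ∉ m; moreover the residue field A/m is a finite field of characteristic p. -/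
/-- `ℤ` is a Jacobson ring. -/
lemma aux_isJacobsonRing_int : IsJacobsonRing ℤ := by
  rw [isJacobsonRing_iff_prime_eq]
  intro P hP
  rcases eq_or_ne P ⊥ with rfl | hne
  · refine le_antisymm (fun n hn => ?_) Ideal.le_jacobson
    by_contra h0
    have hn0 : n ≠ 0 := by simpa using h0
    obtain ⟨q, hqle, hq⟩ := Nat.exists_infinite_primes (n.natAbs + 1)
    have hqprime : Prime (q : ℤ) := Nat.prime_iff_prime_int.mp hq
    have hmax : (Ideal.span {(q : ℤ)}).IsMaximal :=
      PrincipalIdealRing.isMaximal_of_irreducible hqprime.irreducible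
    have : n ∈ Ideal.span {(q : ℤ)} :=
      (Ideal.mem_sInf.mp hn) ⟨bot_le, hmax⟩
    have hdvd : (q : ℤ) ∣ n := Ideal.mem_span_singleton.mp this
    have : q ∣ n.natAbs := Int.natCast_dvd.mp hdvd
    have := Nat.le_of_dvd (Int.natAbs_pos.mpr hn0) this
    omega
  · exact Ideal.jacobson_eq_self_of_isMaximal (H := IsPrime.to_maximal_ideal hne)

/-- **Lemma.** Let `A` be an integral domain that is a finitely generated `ℤ`-algebra,
let `x ∈ A` be nonzero and let `p` be a prime number with `x ∉ √(pA)`. Then there is a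
maximal ideal `m` of `A` with `p ∈ m` and `x ∉ m`; moreover the residue field `A/m` is
a finite field of characteristic `p`. -/
theorem exists_maximal_ideal_containing_prime_avoiding
    {A : Type*} [CommRing A] [IsDomain A] [Algebra.FiniteType ℤ A]
    (x : A) (hx : x ≠ 0) (p : ℕ) (hp : p.Prime)
    (hrad : x ∉ (Ideal.span {(p : A)}).radical) :
    ∃ m : Ideal A, m.IsMaximal ∧ (p : A) ∈ m ∧ x ∉ m ∧
      Finite (A ⧸ m) ∧ CharP (A ⧸ m) p := by
  haveI : IsJacobsonRing ℤ := aux_isJacobsonRing_int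
  haveI hJac : IsJacobsonRing A := isJacobsonRing_of_finiteType (A := ℤ)
  -- find a prime P containing p with x ∉ P
  rw [Ideal.radical_eq_sInf, Ideal.mem_sInf] at hrad
  push_neg at hrad
  obtain ⟨P, ⟨hPle, hPprime⟩, hxP⟩ := hrad
  -- P is its own jacobson radical
  have hPj : P.jacobson = P := hJac.out hPprime.isRadical
  rw [← hPj, Ideal.jacobson, Ideal.mem_sInf] at hxP
  push_neg at hxP
  obtain ⟨m, ⟨hPm, hmmax⟩, hxm⟩ := hxP
  have hpm : (p : A) ∈ m := hPm (hPle (Ideal.subset_span rfl))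
  haveI : m.IsMaximal := hmmax
  have hp0 : (p : A ⧸ m) = 0 := by
    rw [← map_natCast (Ideal.Quotient.mk m) p]
    exact Ideal.Quotient.eq_zero_iff_mem.mpr hpm
  haveI hchar : CharP (A ⧸ m) p := (CharP.charP_iff_prime_eq_zero hp).mpr hp0
  letI : Field (A ⧸ m) := Ideal.Quotient.field m
  haveI : Algebra.FiniteType ℤ (A ⧸ m) :=
    Algebra.FiniteType.of_surjective (Ideal.Quotient.mkₐ ℤ m)
      (Ideal.Quotient.mkₐ_surjective ℤ m)
  haveI : Fact p.Prime := ⟨hp⟩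
  haveI : Algebra (ZMod p) (A ⧸ m) := ZMod.algebra (A ⧸ m) p
  haveI : IsScalarTower ℤ (ZMod p) (A ⧸ m) :=
    IsScalarTower.of_algebraMap_eq' (by
      apply RingHom.ext_int)
  haveI : Algebra.FiniteType (ZMod p) (A ⧸ m) :=
    Algebra.FiniteType.of_restrictScalars_finiteType ℤ (ZMod p) (A ⧸ m)
  haveI : Module.Finite (ZMod p) (A ⧸ m) :=
    finite_of_finite_type_of_isJacobsonRing (ZMod p) (A ⧸ m)
  exact ⟨m, hmmax, hpm, hxm, Module.finite_of_finite (ZMod p), hchar⟩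
end

section
/- Let F be a finite field of characteristic p, where p is a prime with p ≡ 1 (mod 4), and let e ∈ F with e ≠ 0. Then there exists n ∈ F such that 1 + e·n² is not a square in F. -/
/-- **Lemma.** Let `F` be a finite field of characteristic `p`, where `p ≡ 1 (mod 4)`,
and let `e ∈ F`, `e ≠ 0`. Then there is `n ∈ F` such that `1 + e·n²` is not a square
in `F`. -/
theorem exists_one_add_mul_sq_not_square {F : Type*} [Field F] [Finite F]
    (p : ℕ) [CharP F p] (hp : p.Prime) (hp4 : p % 4 = 1) (e : F) (he : e ≠ 0) :
    ∃ n : F, ¬ ∃ w : F, 1 + e * n ^ 2 = w ^ 2 := by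
  have : Fintype F := Fintype.ofFinite F
  classical
  by_contra hcon
  push_neg at hcon
  -- `hcon : ∀ n, ∃ w, 1 + e * n ^ 2 = w ^ 2`
  have hp2 : p ≠ 2 := by intro h; rw [h] at hp4; norm_num at hp4
  obtain ⟨m, -, hcard⟩ := FiniteField.card F p
  have hq4 : Fintype.card F % 4 = 1 := by
    rw [hcard, Nat.pow_mod, hp4, one_pow]
    norm_num
  have hneg1 : IsSquare (-1 : F) :=
    FiniteField.isSquare_neg_one_iff.mpr (by omega)
  obtain ⟨i, hi⟩ := hneg1
  have hi0 : i ≠ 0 := by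
    intro h; rw [h] at hi; simp at hi
  -- The set of all squares
  set Sq : Finset F := Finset.image (fun x => x ^ 2) Finset.univ with hSq
  -- The image of `n ↦ 1 + e n²` is exactly the set of squares
  have hIS : Finset.image (fun n => 1 + e * n ^ 2) Finset.univ = Sq := by
    apply Finset.eq_of_subset_of_card_le
    · intro x hx
      simp only [Finset.mem_image, Finset.mem_univ, true_and, hSq] at hx ⊢
      obtain ⟨n, rfl⟩ := hx
      obtain ⟨w, hw⟩ := hcon n
      exact ⟨w, hw.symm⟩
    · have himg : Finset.image (fun n => 1 + e * n ^ 2) Finset.univ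
          = Finset.image (fun s => 1 + e * s) Sq := by
        rw [hSq, Finset.image_image]; rfl
      have hinj : Function.Injective (fun s : F => 1 + e * s) := by
        intro a b h
        simp only at h
        exact mul_left_cancel₀ he (by linear_combination h)
      refine le_of_eq ?_
      calc Sq.card = (Finset.image (fun s => 1 + e * s) Sq).card :=
            (Finset.card_image_of_injective Sq hinj).symm
        _ = (Finset.image (fun n => 1 + e * n ^ 2) Finset.univ).card := by rw [himg]
  -- hence 0 is of the form 1 + e n², so e is a square
  have h0 : (0 : F) ∈ Sq := by
    simp only [hSq, Finset.mem_image, Finset.mem_univ, true_and]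
    exact ⟨0, by ring⟩
  rw [← hIS] at h0
  obtain ⟨n0, -, hn0⟩ := Finset.mem_image.mp h0
  have hn0ne : n0 ≠ 0 := by
    rintro rfl; simp at hn0
  have hesq : e = (i / n0) ^ 2 := by
    field_simp
    linear_combination hn0 + hi
  -- every sum of two squares is a square
  have hsum : ∀ a b : F, ∃ w : F, a ^ 2 + b ^ 2 = w ^ 2 := by
    intro a b
    rcases eq_or_ne a 0 with rfl | ha
    · exact ⟨b, by ring⟩
    · obtain ⟨w, hw⟩ := hcon (n0 * b / (i * a))
      refine ⟨a * w, ?_⟩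
      rw [hesq] at hw
      field_simp at hw
      -- hw : ... = w ^ 2 * (...)
      have hw' : a ^ 2 + b ^ 2 = (a * w) ^ 2 := by
        have hcanc : (i ^ 2 * n0 ^ 2) * (a ^ 2 + b ^ 2)
            = (i ^ 2 * n0 ^ 2) * ((a * w) ^ 2) := by linear_combination (i ^ 2 * n0 ^ 2) * hw
        exact mul_left_cancel₀
          (mul_ne_zero (pow_ne_zero 2 hi0) (pow_ne_zero 2 hn0ne)) hcanc
      exact hw'
  -- the squares form an additive subgroup
  have hzero : (0 : F) ∈ Sq := by
    simp only [hSq, Finset.mem_image, Finset.mem_univ, true_and]; exact ⟨0, by ring⟩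
  have hadd : ∀ x ∈ Sq, ∀ y ∈ Sq, x + y ∈ Sq := by
    intro x hx y hy
    simp only [hSq, Finset.mem_image, Finset.mem_univ, true_and] at hx hy ⊢
    obtain ⟨a, rfl⟩ := hx
    obtain ⟨b, rfl⟩ := hy
    obtain ⟨w, hw⟩ := hsum a b
    exact ⟨w, hw.symm⟩
  have hneg : ∀ x ∈ Sq, -x ∈ Sq := by
    intro x hx
    simp only [hSq, Finset.mem_image, Finset.mem_univ, true_and] at hx ⊢
    obtain ⟨a, rfl⟩ := hx
    exact ⟨i * a, by linear_combination (-(a ^ 2)) * hi⟩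
  let S : AddSubgroup F :=
    { carrier := ↑Sq
      add_mem' := fun {x y} hx hy => hadd x hx y hy
      zero_mem' := hzero
      neg_mem' := fun {x} hx => hneg x hx }
  have hdvd : Sq.card ∣ Fintype.card F := by
    have h1 : Nat.card S ∣ Nat.card F := AddSubgroup.card_addSubgroup_dvd_card S
    have h2 : Nat.card S = Sq.card := by
      rw [Nat.card_eq_fintype_card, ← Fintype.card_coe Sq]
      exact Fintype.card_congr (Equiv.subtypeEquivRight fun x => Iff.rfl)
    rwa [h2, Nat.card_eq_fintype_card] at h1
  -- q ≤ 2 * |Sq|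
  have hle : Fintype.card F ≤ 2 * Sq.card := by
    rw [← Finset.card_univ, hSq]
    apply Finset.card_le_mul_card_image
    intro b hb
    simp only [hSq, Finset.mem_image, Finset.mem_univ, true_and] at hb
    obtain ⟨a, rfl⟩ := hb
    have hsub : Finset.univ.filter (fun x => x ^ 2 = a ^ 2) ⊆ {a, -a} := by
      intro x hx
      simp only [Finset.mem_filter, Finset.mem_univ, true_and] at hx
      have : (x - a) * (x + a) = 0 := by linear_combination hx
      rcases mul_eq_zero.mp this with h | h
      · simp [sub_eq_zero.mp h]
      · simp [eq_neg_of_add_eq_zero_left h]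
    calc (Finset.univ.filter (fun x => x ^ 2 = a ^ 2)).card
        ≤ ({a, -a} : Finset F).card := Finset.card_le_card hsub
      _ ≤ 2 := Finset.card_insert_le _ _ |>.trans (by simp)
  -- |Sq| < q since there is a nonsquare
  have hchar2 : ringChar F ≠ 2 := by
    rw [ringChar.eq F p]; exact hp2
  obtain ⟨u, hu⟩ := FiniteField.exists_nonsquare hchar2
  have hlt : Sq.card < Fintype.card F := by
    rw [← Finset.card_univ]
    apply Finset.card_lt_card
    rw [Finset.ssubset_univ_iff]
    intro h
    apply hu
    have : u ∈ Sq := h ▸ Finset.mem_univ u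
    simp only [hSq, Finset.mem_image, Finset.mem_univ, true_and] at this
    obtain ⟨a, rfl⟩ := this
    exact ⟨a, sq a⟩
  -- q is odd
  have hodd : Fintype.card F % 2 = 1 := by
    rw [hcard]
    exact Nat.odd_iff.mp ((hp.odd_of_ne_two hp2).pow)
  -- final contradiction
  obtain ⟨k, hk⟩ := hdvd
  have hd0 : 0 < Sq.card := Finset.card_pos.mpr ⟨0, hzero⟩
  have hk2 : 2 ≤ k := by
    rcases Nat.lt_or_ge k 2 with h | h
    · interval_cases k <;> omega
    · exact h
  have h2d : 2 * Sq.card ≤ Sq.card * k := by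
    rw [mul_comm]; exact Nat.mul_le_mul_left _ hk2
  have h2 : Fintype.card F = 2 * Sq.card := le_antisymm hle (hk ▸ h2d)
  omega
end

section
/- Let K be a field of characteristic zero and let L be a finitely generated field extension of K of transcendence degree 1 over K. Then there exists an irreducible polynomial f ∈ K[X,Y] and a K-algebra isomorphism between L and Frac(K[X,Y]/(f)). In particular L = K(x, y) for some x, y ∈ L with x transcendental over K and y algebraic over K(x). -/
set_option synthInstance.maxHeartbeats 1000000
set_option maxHeartbeats 1000000

open Polynomial IntermediateField in
/-- **Proposition.** Let `K` be a field of characteristic zero and `L` a finitely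
generated field extension of `K` of transcendence degree `1`. Then there is an
irreducible polynomial `f ∈ K[X,Y]` and a `K`-isomorphism `L ≅ Frac(K[X,Y]/(f))`.
In particular `L = K(x, y)` with `x` transcendental over `K` and `y` algebraic over
`K(x)`. -/
theorem fg_transdeg_one_extension_is_function_field_of_plane_curve
    {K L : Type*} [Field K] [CharZero K] [Field L] [Algebra K L]
    (hfg : ∃ s : Finset L, IntermediateField.adjoin K (s : Set L) = ⊤)
    (htr : ∃ x : L, Transcendental K x ∧
      Algebra.IsAlgebraic (IntermediateField.adjoin K {x}) L) :
    (∃ f : MvPolynomial (Fin 2) K, Irreducible f ∧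
      ∃ φ : L ≃+* FractionRing (MvPolynomial (Fin 2) K ⧸ Ideal.span {f}),
        ∀ c : K, φ (algebraMap K L c) =
          algebraMap (MvPolynomial (Fin 2) K ⧸ Ideal.span {f})
            (FractionRing (MvPolynomial (Fin 2) K ⧸ Ideal.span {f}))
            (Ideal.Quotient.mk (Ideal.span {f}) (MvPolynomial.C c))) ∧
    (∃ x y : L, IntermediateField.adjoin K {x, y} = ⊤ ∧ Transcendental K x ∧
      IsAlgebraic (IntermediateField.adjoin K {x}) y) := by
  classical
  obtain ⟨x, hxt, halg⟩ := htr
  obtain ⟨s, hs⟩ := hfg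
  let A := Polynomial K
  let χ : A →ₐ[K] L := Polynomial.aeval x
  have hχinj : Function.Injective χ := transcendental_iff_injective.mp hxt
  let Fq := FractionRing A
  let ιa : Fq →ₐ[K] L := IsFractionRing.liftAlgHom (g := χ) hχinj
  letI : Algebra Fq L := ιa.toRingHom.toAlgebra
  have halgmap : ∀ z : Fq, algebraMap Fq L z = ιa z := fun _ => rfl
  haveI : IsScalarTower K Fq L := IsScalarTower.of_algebraMap_eq fun c => (ιa.commutes c).symm
  have hlift : ∀ p : A, algebraMap Fq L (algebraMap A Fq p) = χ p := fun p => by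
    rw [halgmap, IsFractionRing.liftAlgHom_apply, IsFractionRing.lift_algebraMap]; rfl
  have hmemF : ∀ z : Fq, ιa z ∈ adjoin K {x} := by
    intro z
    obtain ⟨p, q, -, rfl⟩ := IsFractionRing.div_surjective (A := A) z
    refine (mem_adjoin_simple_iff K _).mpr ⟨p, q, ?_⟩
    rw [map_div₀, ← halgmap, ← halgmap, hlift, hlift]
  have hrange : ιa.fieldRange = adjoin K {x} := by
    apply le_antisymm
    · rintro _ ⟨z, rfl⟩; exact hmemF z
    · intro z hz
      obtain ⟨r, t, rfl⟩ := (mem_adjoin_simple_iff K z).mp hz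
      refine ⟨algebraMap A Fq r / algebraMap A Fq t, ?_⟩
      show ιa _ = _
      rw [map_div₀, ← halgmap, ← halgmap, hlift, hlift]
  let eqF : Fq ≃ₐ[K] adjoin K {x} :=
    (AlgEquiv.ofInjectiveField ιa).trans (IntermediateField.equivOfEq hrange)
  have hcoe : ∀ z : Fq, (eqF z : L) = ιa z := fun z => rfl
  have hcomp : (algebraMap Fq L).comp (eqF.symm.toRingEquiv : (adjoin K {x}) →+* Fq)
      = algebraMap (adjoin K {x}) L := by
    ext u
    simp only [RingHom.coe_comp, Function.comp_apply]
    show algebraMap Fq L (eqF.symm u) = algebraMap (adjoin K {x}) L u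
    have h1 : ιa (eqF.symm u) = ((eqF (eqF.symm u) : adjoin K {x}) : L) := (hcoe _).symm
    rw [halgmap, h1, AlgEquiv.apply_symm_apply]
    rfl
  haveI halgFq : Algebra.IsAlgebraic Fq L := by
    constructor
    intro a
    obtain ⟨p, hp0, hpa⟩ := (halg.isAlgebraic a)
    refine ⟨p.map (eqF.symm.toRingEquiv : (adjoin K {x}) →+* Fq), ?_, ?_⟩
    · exact Polynomial.map_ne_zero_iff (RingEquiv.injective _) |>.mpr hp0
    · rw [Polynomial.aeval_def, Polynomial.eval₂_map, hcomp]
      exact hpa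
  have htop2 : adjoin Fq ((s : Set L)) = ⊤ := by
    have hle : adjoin K (s : Set L) ≤ (adjoin Fq (s : Set L)).restrictScalars K :=
      IntermediateField.adjoin_le_iff.mpr (IntermediateField.subset_adjoin Fq _)
    rw [hs, top_le_iff] at hle
    exact IntermediateField.restrictScalars_injective K (by rw [hle, IntermediateField.restrictScalars_top])
  haveI : FiniteDimensional Fq L := by
    haveI : Finite ((s : Set L)) := s.finite_toSet
    have hfd : FiniteDimensional Fq (adjoin Fq (s : Set L)) :=
      IntermediateField.finiteDimensional_adjoin
        (fun a _ => ((halgFq.isAlgebraic a).isIntegral))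
    rw [htop2] at hfd
    exact (IntermediateField.topEquiv (F := Fq) (E := L)).toLinearEquiv.finiteDimensional
  haveI : CharZero Fq := charZero_of_injective_algebraMap (IsFractionRing.injective A Fq)
  obtain ⟨y, hy⟩ := Field.exists_primitive_element Fq L
  have hyint : IsIntegral Fq y := (halgFq.isAlgebraic y).isIntegral
  set m := minpoly Fq y with hmdef
  have hmirr : Irreducible m := minpoly.irreducible hyint
  have hm0 : m ≠ 0 := minpoly.ne_zero hyint
  obtain ⟨b, hb⟩ := IsLocalization.integerNormalization_map_to_map (nonZeroDivisors A) m
  set f₁ : Polynomial A := IsLocalization.integerNormalization (nonZeroDivisors A) m with hf₁def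
  have hf₁0 : f₁ ≠ 0 := fun h => hm0 (IsFractionRing.integerNormalization_eq_zero_iff.mp h)
  set f₀ := f₁.primPart with hf₀def
  have hprim : f₀.IsPrimitive := f₁.isPrimitive_primPart
  have hconmul : f₁ = Polynomial.C f₁.content * f₀ := f₁.eq_C_content_mul_primPart
  have hcon0 : f₁.content ≠ 0 := fun h => hf₁0 (Polynomial.content_eq_zero_iff.mp h)
  have hb' : f₁.map (algebraMap A Fq) = Polynomial.C (algebraMap A Fq b) * m := by
    rw [hb, ← IsScalarTower.algebraMap_smul Fq ((b : A)) m, Polynomial.smul_eq_C_mul]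
  have h2 : f₁.map (algebraMap A Fq)
      = Polynomial.C (algebraMap A Fq f₁.content) * f₀.map (algebraMap A Fq) := by
    conv_lhs => rw [hconmul]
    rw [Polynomial.map_mul, Polynomial.map_C]
  have hAinj : Function.Injective (algebraMap A Fq) := IsFractionRing.injective A Fq
  have hcu : IsUnit (Polynomial.C (algebraMap A Fq f₁.content)) :=
    Polynomial.isUnit_C.mpr (isUnit_iff_ne_zero.mpr (fun h => hcon0 (by
      apply hAinj; rw [h, map_zero])))
  have hbu : IsUnit (Polynomial.C (algebraMap A Fq (b : A))) :=
    Polynomial.isUnit_C.mpr (isUnit_iff_ne_zero.mpr (fun h => nonZeroDivisors.coe_ne_zero b (by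
      apply hAinj; rw [h, map_zero])))
  have key : ∀ (u w v : Polynomial Fq), IsUnit u → u * w = v → Associated v w := by
    intro u w v hu h
    exact Associated.symm ⟨hu.unit, by rw [mul_comm, IsUnit.unit_spec]; exact h⟩
  have hAssoc : Associated m (f₀.map (algebraMap A Fq)) :=
    (key _ _ _ hbu hb'.symm).symm.trans (key _ _ _ hcu h2.symm)
  have hf₀irr : Irreducible f₀ :=
    (hprim.irreducible_iff_irreducible_map_fraction_map (K := Fq)).mpr (hAssoc.irreducible hmirr)
  let ψ' : Polynomial A →ₐ[K] L := Polynomial.aevalTower χ y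
  have heval : ∀ g : Polynomial A, ψ' g = Polynomial.aeval y (g.map (algebraMap A Fq)) := by
    intro g
    rw [Polynomial.aeval_def, Polynomial.eval₂_map]
    have hc : (algebraMap Fq L).comp (algebraMap A Fq) = (χ : A →+* L) := RingHom.ext hlift
    rw [hc]
    rfl
  have hψ'f₀ : ψ' f₀ = 0 := by
    obtain ⟨u, hu⟩ := hAssoc
    rw [heval, ← hu, map_mul, Polynomial.aeval_def, hmdef]
    rw [← Polynomial.aeval_def, minpoly.aeval, zero_mul]
  have hker' : ∀ g : Polynomial A, ψ' g = 0 ↔ f₀ ∣ g := by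
    intro g
    constructor
    · intro hg
      have hdvd : m ∣ g.map (algebraMap A Fq) := minpoly.dvd Fq y (by rw [← heval g]; exact hg)
      have hdvd0 : f₀.map (algebraMap A Fq) ∣ g.map (algebraMap A Fq) := hAssoc.symm.dvd.trans hdvd
      by_cases hg0 : g = 0
      · simp [hg0]
      · have hgcu : IsUnit (Polynomial.C (algebraMap A Fq g.content)) :=
          Polynomial.isUnit_C.mpr (isUnit_iff_ne_zero.mpr (fun h => (fun hh => hg0 (Polynomial.content_eq_zero_iff.mp hh)) (by
            apply hAinj; rw [h, map_zero])))
        have hgsplit : g.map (algebraMap A Fq)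
            = Polynomial.C (algebraMap A Fq g.content) * g.primPart.map (algebraMap A Fq) := by
          conv_lhs => rw [g.eq_C_content_mul_primPart]
          rw [Polynomial.map_mul, Polynomial.map_C]
        rw [hgsplit, IsUnit.dvd_mul_left hgcu] at hdvd0
        exact (hprim.dvd_of_fraction_map_dvd_fraction_map hdvd0).trans g.primPart_dvd
    · rintro ⟨t, rfl⟩
      rw [map_mul, hψ'f₀, zero_mul]
  let e2 : MvPolynomial (Fin 1) K ≃ₐ[K] A :=
    (MvPolynomial.finSuccEquiv K 0).trans (Polynomial.mapAlgEquiv (MvPolynomial.isEmptyAlgEquiv K (Fin 0)))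
  let eA : MvPolynomial (Fin 2) K ≃ₐ[K] Polynomial A :=
    (MvPolynomial.finSuccEquiv K 1).trans (Polynomial.mapAlgEquiv e2)
  let ψ : MvPolynomial (Fin 2) K →ₐ[K] L := ψ'.comp eA.toAlgHom
  set f : MvPolynomial (Fin 2) K := eA.symm f₀ with hfdef
  have hfirr : Irreducible f := by
    rw [hfdef, ← MulEquiv.irreducible_iff (eA : MvPolynomial (Fin 2) K ≃* Polynomial A)]
    show Irreducible (eA (eA.symm f₀))
    rw [AlgEquiv.apply_symm_apply]
    exact hf₀irr
  have hkerψ : ∀ g : MvPolynomial (Fin 2) K, ψ g = 0 ↔ f ∣ g := by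
    intro g
    have h1 : ψ g = ψ' (eA g) := rfl
    rw [h1, hker']
    constructor
    · intro h
      have := map_dvd eA.symm h
      rwa [AlgEquiv.symm_apply_apply] at this
    · intro h
      have := map_dvd eA h
      rwa [hfdef, AlgEquiv.apply_symm_apply] at this
  let I : Ideal (MvPolynomial (Fin 2) K) := Ideal.span {f}
  have hspan : ∀ g : MvPolynomial (Fin 2) K, g ∈ I ↔ f ∣ g := fun g => Ideal.mem_span_singleton
  let ψbar : (MvPolynomial (Fin 2) K ⧸ I) →+* L :=
    Ideal.Quotient.lift I (ψ : MvPolynomial (Fin 2) K →+* L)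
      (fun a ha => (hkerψ a).mpr ((hspan a).mp ha))
  have hψbar_mk : ∀ a, ψbar (Ideal.Quotient.mk I a) = ψ a := fun a => rfl
  have hψbarinj : Function.Injective ψbar := by
    rw [injective_iff_map_eq_zero]
    intro q hq
    obtain ⟨a, rfl⟩ := Ideal.Quotient.mk_surjective q
    rw [hψbar_mk] at hq
    exact (Ideal.Quotient.eq_zero_iff_mem).mpr ((hspan a).mpr ((hkerψ a).mp hq))
  letI : Algebra (MvPolynomial (Fin 2) K ⧸ I) L := ψbar.toAlgebra
  have halgmap2 : ∀ q, algebraMap (MvPolynomial (Fin 2) K ⧸ I) L q = ψbar q := fun _ => rfl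
  have hne : ∀ q : MvPolynomial (Fin 2) K ⧸ I, ψbar q ≠ 0 → q ∈ nonZeroDivisors _ := by
    intro q hq
    rw [mem_nonZeroDivisors_iff_right]
    intro z hz
    apply hψbarinj
    have : ψbar z * ψbar q = 0 := by rw [← map_mul, hz, map_zero]
    rcases mul_eq_zero.mp this with h | h
    · rw [h, map_zero]
    · exact absurd h hq
  haveI hfrac : IsFractionRing (MvPolynomial (Fin 2) K ⧸ I) L := by
    constructor
    constructor
    · rintro ⟨t, ht⟩
      refine isUnit_iff_ne_zero.mpr ?_
      intro h0
      rw [halgmap2] at h0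
      have ht0 : t = 0 := hψbarinj (by rw [h0, map_zero])
      rw [ht0] at ht
      have h10 : (1 : MvPolynomial (Fin 2) K ⧸ I) = 0 := mem_nonZeroDivisors_iff_right.mp ht 1 (by rw [mul_zero])
      have := congrArg ψbar h10
      rw [map_one, map_zero] at this
      exact one_ne_zero this
    · intro z
      have hz : z ∈ adjoin Fq {y} := by rw [hy]; exact IntermediateField.mem_top
      obtain ⟨P, Q, hPQ⟩ := (mem_adjoin_simple_iff Fq z).mp hz
      by_cases hQ0 : Polynomial.aeval y Q = 0
      · refine ⟨⟨0, 1⟩, ?_⟩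
        have hz0 : z = 0 := by rw [hPQ, hQ0, div_zero]
        simp [hz0, halgmap2]
      · obtain ⟨sP, hsP⟩ := IsLocalization.integerNormalization_map_to_map (nonZeroDivisors A) P
        obtain ⟨sQ, hsQ⟩ := IsLocalization.integerNormalization_map_to_map (nonZeroDivisors A) Q
        set Pi := IsLocalization.integerNormalization (nonZeroDivisors A) P with hPidef
        set Qi := IsLocalization.integerNormalization (nonZeroDivisors A) Q with hQidef
        have hevalP : ψ' Pi = χ (sP : A) * Polynomial.aeval y P := by
          rw [heval, hsP, ← IsScalarTower.algebraMap_smul Fq ((sP : A)) P,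
            Polynomial.smul_eq_C_mul, map_mul, Polynomial.aeval_C, hlift]
        have hevalQ : ψ' Qi = χ (sQ : A) * Polynomial.aeval y Q := by
          rw [heval, hsQ, ← IsScalarTower.algebraMap_smul Fq ((sQ : A)) Q,
            Polynomial.smul_eq_C_mul, map_mul, Polynomial.aeval_C, hlift]
        have hχsP : χ (sP : A) ≠ 0 :=
          fun h => nonZeroDivisors.coe_ne_zero sP (hχinj (by rw [h, map_zero]))
        have hχsQ : χ (sQ : A) ≠ 0 :=
          fun h => nonZeroDivisors.coe_ne_zero sQ (hχinj (by rw [h, map_zero]))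
        have hCP : ψ' (Polynomial.C (sP : A)) = χ (sP : A) := Polynomial.aevalTower_C _ _ _
        have hCQ : ψ' (Polynomial.C (sQ : A)) = χ (sQ : A) := Polynomial.aevalTower_C _ _ _
        have hψnum : ψ (eA.symm (Pi * Polynomial.C (sQ : A)))
            = χ (sP : A) * Polynomial.aeval y P * χ (sQ : A) := by
          show ψ' (eA (eA.symm _)) = _
          rw [AlgEquiv.apply_symm_apply, map_mul, hevalP, hCQ]
        have hψden : ψ (eA.symm (Qi * Polynomial.C (sP : A)))
            = χ (sQ : A) * Polynomial.aeval y Q * χ (sP : A) := by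
          show ψ' (eA (eA.symm _)) = _
          rw [AlgEquiv.apply_symm_apply, map_mul, hevalQ, hCP]
        have hdenne : ψ (eA.symm (Qi * Polynomial.C (sP : A))) ≠ 0 := by
          rw [hψden]
          exact mul_ne_zero (mul_ne_zero hχsQ hQ0) hχsP
        refine ⟨⟨Ideal.Quotient.mk I (eA.symm (Pi * Polynomial.C (sQ : A))),
          ⟨Ideal.Quotient.mk I (eA.symm (Qi * Polynomial.C (sP : A))), hne _ ?_⟩⟩, ?_⟩
        · rw [hψbar_mk]; exact hdenne
        · show z * ψ (eA.symm (Qi * Polynomial.C (sP : A))) = ψ (eA.symm (Pi * Polynomial.C (sQ : A)))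
          rw [hψnum, hψden, hPQ]
          field_simp

    · intro a b h
      have hab : a = b := hψbarinj h
      exact ⟨1, by rw [hab]⟩
  let Φ := IsLocalization.algEquiv (nonZeroDivisors (MvPolynomial (Fin 2) K ⧸ I))
    (FractionRing (MvPolynomial (Fin 2) K ⧸ I)) L
  have hcompat : ∀ c : K, Φ.symm.toRingEquiv (algebraMap K L c)
      = algebraMap (MvPolynomial (Fin 2) K ⧸ I) (FractionRing (MvPolynomial (Fin 2) K ⧸ I))
          (Ideal.Quotient.mk I (MvPolynomial.C c)) := by
    intro c
    have h1 : algebraMap K L c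
        = algebraMap (MvPolynomial (Fin 2) K ⧸ I) L (Ideal.Quotient.mk I (MvPolynomial.C c)) := by
      rw [halgmap2, hψbar_mk, ← MvPolynomial.algebraMap_eq]
      exact (ψ.commutes c).symm
    rw [h1]
    exact Φ.symm.commutes _
  have hxT : adjoin K {x} ≤ adjoin K ({x, y} : Set L) :=
    IntermediateField.adjoin.mono K _ _ (Set.singleton_subset_iff.mpr (Set.mem_insert x {y}))
  let T' : IntermediateField Fq L := Subfield.toIntermediateField
      (IntermediateField.adjoin K ({x, y} : Set L)).toSubfield (fun z => hxT (hmemF z))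
  have hyT' : y ∈ T' := IntermediateField.subset_adjoin K ({x, y} : Set L)
    (Set.mem_insert_of_mem x rfl)
  have hT'top : adjoin Fq {y} ≤ T' := by
    rw [IntermediateField.adjoin_le_iff]
    intro w hw
    rw [Set.mem_singleton_iff] at hw
    rw [hw]
    exact hyT'
  rw [hy] at hT'top
  have hTtop : IntermediateField.adjoin K ({x, y} : Set L) = ⊤ := by
    rw [eq_top_iff]
    intro z _
    exact hT'top IntermediateField.mem_top
  exact ⟨⟨f, hfirr, Φ.symm.toRingEquiv, hcompat⟩, x, y, hTtop, hxt, halg.isAlgebraic y⟩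
end

section
/- Let K be a field of characteristic zero, F an algebraic closure of K, and P a prime ideal of F[x₁,…,x_N]. If K is a field of parametrization of P, i.e. there is a field isomorphism ψ : F(P) → F(t) with ψ|_F = id, ψ([x_i]) ∈ K(t) for all i, and ψ⁻¹(t) ∈ K(P), then K(P) is isomorphic to the rational function field K(t) by an isomorphism that is the identity on K, and K is a field of definition of P, i.e. P is generated by its contraction P ∩ K[x₁,…,x_N]. -/
set_option synthInstance.maxHeartbeats 1000000
set_option maxHeartbeats 1000000

noncomputable section

/-- The coefficient-extension ring homomorphism `K[x₁,…,x_N] → F[x₁,…,x_N]`. -/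
def coeffExt (K F : Type*) [Field K] [Field F] [Algebra K F] (N : ℕ) :
    MvPolynomial (Fin N) K →+* MvPolynomial (Fin N) F :=
  MvPolynomial.map (algebraMap K F)

/-- `K` is a field of definition of `P`: `P` is generated by its contraction to
`K[x₁,…,x_N]`. -/
def IsFieldOfDefinition (K : Type*) [Field K] {F : Type*} [Field F] [Algebra K F] {N : ℕ}
    (P : Ideal (MvPolynomial (Fin N) F)) : Prop :=
  P = Ideal.map (coeffExt K F N) (Ideal.comap (coeffExt K F N) P)

/-- `F(P) = Frac(F[x₁,…,x_N]/P)`, the function field of the variety defined by `P`. -/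
abbrev funcField {F : Type*} [Field F] {N : ℕ} (P : Ideal (MvPolynomial (Fin N) F)) :=
  FractionRing (MvPolynomial (Fin N) F ⧸ P)

/-- The canonical embedding of the constants `F` into `F(P)`. -/
def embConst {F : Type*} [Field F] {N : ℕ} (P : Ideal (MvPolynomial (Fin N) F)) :
    F →+* funcField P :=
  (algebraMap (MvPolynomial (Fin N) F ⧸ P) (funcField P)).comp
    ((Ideal.Quotient.mk P).comp MvPolynomial.C)

/-- The class `[xᵢ]` of the variable `xᵢ` in `F(P)`. -/
def clsX {F : Type*} [Field F] {N : ℕ} (P : Ideal (MvPolynomial (Fin N) F)) (i : Fin N) :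
    funcField P :=
  algebraMap (MvPolynomial (Fin N) F ⧸ P) (funcField P) (Ideal.Quotient.mk P (MvPolynomial.X i))

/-- The subfield `L(t)` of `F(t)` generated by an intermediate field `K ⊆ L ⊆ F`
and the variable `t`. -/
def ratSubfield {K F : Type*} [Field K] [Field F] [Algebra K F]
    (L : IntermediateField K F) : Subfield (RatFunc F) :=
  Subfield.closure ((fun a : F => RatFunc.C a) '' (L : Set F) ∪ {RatFunc.X})

/-- The subfield `L(P)` of `F(P)` generated by an intermediate field `K ⊆ L ⊆ F` and
the classes `[x₁],…,[x_N]`. -/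
def funcSubfield {K F : Type*} [Field K] [Field F] [Algebra K F] {N : ℕ}
    (P : Ideal (MvPolynomial (Fin N) F)) [P.IsPrime] (L : IntermediateField K F) :
    Subfield (funcField P) :=
  Subfield.closure ((embConst P) '' (L : Set F) ∪ Set.range (clsX P))

/-- An intermediate field `K ⊆ L ⊆ F` is a field of parametrization of the rational
curve defined by a prime ideal `P ⊆ F[x₁,…,x_N]` if there is a field isomorphism
`ψ : F(P) ≃ F(t)` restricting to the identity on `F`, with `ψ([xᵢ]) ∈ L(t)` for all `i`
and `ψ⁻¹(t) ∈ L(P)`. -/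
def IsFieldOfParametrization {K F : Type*} [Field K] [Field F] [Algebra K F] {N : ℕ}
    (P : Ideal (MvPolynomial (Fin N) F)) [P.IsPrime] (L : IntermediateField K F) : Prop :=
  ∃ ψ : funcField P ≃+* RatFunc F,
    (∀ c : F, ψ (embConst P c) = RatFunc.C c) ∧
    (∀ i : Fin N, ψ (clsX P i) ∈ ratSubfield L) ∧
    ψ.symm RatFunc.X ∈ funcSubfield P L

end

/-- `K(P) = Frac(K[x₁,…,x_N]/P^c)`, where `P^c = P ∩ K[x₁,…,x_N]`. -/
abbrev contractedFuncField (K : Type*) [Field K] {F : Type*} [Field F] [Algebra K F]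
    {N : ℕ} (P : Ideal (MvPolynomial (Fin N) F)) :=
  FractionRing (MvPolynomial (Fin N) K ⧸ Ideal.comap (coeffExt K F N) P)

/-- The canonical embedding of the constants `K` into `K(P)`. -/
noncomputable def embConstContracted (K : Type*) [Field K] {F : Type*} [Field F] [Algebra K F]
    {N : ℕ} (P : Ideal (MvPolynomial (Fin N) F)) : K →+* contractedFuncField K P :=
  (algebraMap (MvPolynomial (Fin N) K ⧸ Ideal.comap (coeffExt K F N) P)
      (contractedFuncField K P)).comp
    ((Ideal.Quotient.mk (Ideal.comap (coeffExt K F N) P)).comp MvPolynomial.C)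

section Aux1

open Polynomial in
/-- The embedding `K[t] → F(t)`. -/
noncomputable def polyEmb (K F : Type*) [Field K] [Field F] [Algebra K F] :
    Polynomial K →+* RatFunc F :=
  (algebraMap (Polynomial F) (RatFunc F)).comp (Polynomial.mapRingHom (algebraMap K F))

lemma polyEmb_injective (K F : Type*) [Field K] [Field F] [Algebra K F] :
    Function.Injective (polyEmb K F) := by
  rw [polyEmb, RingHom.coe_comp]
  exact (IsFractionRing.injective _ _).comp
    (Polynomial.map_injective _ (algebraMap K F).injective)

/-- The coefficient-extension embedding `K(t) → F(t)`. -/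
noncomputable def iotaRat (K F : Type*) [Field K] [Field F] [Algebra K F] :
    RatFunc K →+* RatFunc F :=
  IsFractionRing.lift (polyEmb_injective K F)

variable {K F : Type*} [Field K] [Field F] [Algebra K F]

lemma iotaRat_algebraMap (p : Polynomial K) :
    iotaRat K F (algebraMap (Polynomial K) (RatFunc K) p) =
      algebraMap (Polynomial F) (RatFunc F) (p.map (algebraMap K F)) :=
  IsFractionRing.lift_algebraMap _ _

lemma iotaRat_C (k : K) : iotaRat K F (RatFunc.C k) = RatFunc.C (algebraMap K F k) := by
  rw [← RatFunc.algebraMap_C, iotaRat_algebraMap, Polynomial.map_C, RatFunc.algebraMap_C]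

lemma iotaRat_X : iotaRat K F RatFunc.X = RatFunc.X := by
  rw [← RatFunc.algebraMap_X (K := K), iotaRat_algebraMap, Polynomial.map_X,
    RatFunc.algebraMap_X]

lemma iotaRat_injective : Function.Injective (iotaRat K F) :=
  (iotaRat K F).injective

lemma polyEmb_range :
    (polyEmb K F).range = Subring.closure
      ((fun a : F => RatFunc.C a) '' ((⊥ : IntermediateField K F) : Set F) ∪ {RatFunc.X}) := by
  apply le_antisymm
  · rintro _ ⟨p, rfl⟩
    induction p using Polynomial.induction_on' with
    | add p q hp hq => rw [map_add]; exact add_mem hp hq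
    | monomial n a =>
      have : polyEmb K F (Polynomial.monomial n a)
          = RatFunc.C (algebraMap K F a) * RatFunc.X ^ n := by
        rw [← Polynomial.C_mul_X_pow_eq_monomial, polyEmb, RingHom.comp_apply]
        simp [RatFunc.algebraMap_C, RatFunc.algebraMap_X]
      rw [this]
      have hmem : (algebraMap K F a) ∈ ((⊥ : IntermediateField K F) : Set F) := by
        rw [IntermediateField.coe_bot]; exact ⟨a, rfl⟩
      have hX : RatFunc.X ∈ ((fun a : F => RatFunc.C a) '' ((⊥ : IntermediateField K F) : Set F)
          ∪ {RatFunc.X}) := Or.inr rfl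
      exact mul_mem (Subring.subset_closure (Or.inl ⟨algebraMap K F a, hmem, rfl⟩))
        (pow_mem (Subring.subset_closure hX) n)
  · rw [Subring.closure_le]
    rintro x (⟨a, ha, rfl⟩ | rfl)
    · rw [IntermediateField.coe_bot] at ha
      obtain ⟨k, rfl⟩ := ha
      exact ⟨Polynomial.C k, by simp [polyEmb, RatFunc.algebraMap_C]⟩
    · exact ⟨Polynomial.X, by simp [polyEmb, RatFunc.algebraMap_X]⟩

lemma iotaRat_fieldRange :
    (iotaRat K F).fieldRange = ratSubfield (⊥ : IntermediateField K F) :=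
  IsFractionRing.lift_fieldRange_eq_of_range_eq _ polyEmb_range

end Aux1

section Aux2

variable (K : Type*) {F : Type*} [Field K] [Field F] [Algebra K F] {N : ℕ}
variable (P : Ideal (MvPolynomial (Fin N) F)) [P.IsPrime]

/-- The embedding `K[x]/P^c → F[x]/P`. -/
noncomputable def quotMap :
    (MvPolynomial (Fin N) K ⧸ Ideal.comap (coeffExt K F N) P) →+*
      (MvPolynomial (Fin N) F ⧸ P) :=
  Ideal.quotientMap P (coeffExt K F N) le_rfl

/-- The embedding `K[x]/P^c → F(P)`. -/
noncomputable def gEmb :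
    (MvPolynomial (Fin N) K ⧸ Ideal.comap (coeffExt K F N) P) →+* funcField P :=
  (algebraMap (MvPolynomial (Fin N) F ⧸ P) (funcField P)).comp (quotMap K P)

lemma gEmb_injective : Function.Injective (gEmb K P) := by
  rw [gEmb, RingHom.coe_comp]
  exact (IsFractionRing.injective _ _).comp (Ideal.quotientMap_injective)

/-- The embedding `K(P) → F(P)`. -/
noncomputable def jmap : contractedFuncField K P →+* funcField P :=
  IsFractionRing.lift (gEmb_injective K P)

lemma jmap_algebraMap (a : MvPolynomial (Fin N) K ⧸ Ideal.comap (coeffExt K F N) P) :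
    jmap K P (algebraMap _ (contractedFuncField K P) a) = gEmb K P a :=
  IsFractionRing.lift_algebraMap (gEmb_injective K P) a

lemma gEmb_mk (g : MvPolynomial (Fin N) K) :
    gEmb K P (Ideal.Quotient.mk _ g) =
      algebraMap (MvPolynomial (Fin N) F ⧸ P) (funcField P)
        (Ideal.Quotient.mk P (coeffExt K F N g)) := by
  rw [gEmb, RingHom.comp_apply, quotMap, Ideal.quotientMap_mk]

lemma jmap_embConstContracted (k : K) :
    jmap K P (embConstContracted K P k) = embConst P (algebraMap K F k) := by
  rw [embConstContracted, RingHom.comp_apply, RingHom.comp_apply, jmap_algebraMap, gEmb_mk K P]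
  rw [embConst, RingHom.comp_apply, RingHom.comp_apply]
  congr 1
  rw [coeffExt, MvPolynomial.map_C]

lemma gEmb_range :
    (gEmb K P).range = Subring.closure
      ((embConst P) '' ((⊥ : IntermediateField K F) : Set F) ∪ Set.range (clsX P)) := by
  apply le_antisymm
  · rintro _ ⟨a, rfl⟩
    obtain ⟨g, rfl⟩ := Ideal.Quotient.mk_surjective a
    rw [gEmb_mk]
    induction g using MvPolynomial.induction_on with
    | C k =>
      have : algebraMap (MvPolynomial (Fin N) F ⧸ P) (funcField P)
          (Ideal.Quotient.mk P (coeffExt K F N (MvPolynomial.C k)))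
          = embConst P (algebraMap K F k) := by
        rw [coeffExt, MvPolynomial.map_C]; rfl
      rw [this]
      have hmem : (algebraMap K F k) ∈ ((⊥ : IntermediateField K F) : Set F) := by
        rw [IntermediateField.coe_bot]; exact ⟨k, rfl⟩
      exact Subring.subset_closure (Or.inl ⟨algebraMap K F k, hmem, rfl⟩)
    | add p q hp hq =>
      rw [map_add, map_add, map_add]; exact add_mem hp hq
    | mul_X p i hp =>
      rw [map_mul, map_mul, map_mul]
      refine mul_mem hp (Subring.subset_closure (Or.inr ⟨i, ?_⟩))
      rw [coeffExt, MvPolynomial.map_X]; rfl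
  · rw [Subring.closure_le]
    rintro x (⟨c, hc, rfl⟩ | ⟨i, rfl⟩)
    · rw [IntermediateField.coe_bot] at hc
      obtain ⟨k, rfl⟩ := hc
      exact ⟨Ideal.Quotient.mk _ (MvPolynomial.C k), by
        rw [gEmb_mk K P, coeffExt, MvPolynomial.map_C]; rfl⟩
    · exact ⟨Ideal.Quotient.mk _ (MvPolynomial.X i), by
        rw [gEmb_mk K P, coeffExt, MvPolynomial.map_X]; rfl⟩

lemma jmap_fieldRange :
    (jmap K P).fieldRange = funcSubfield P (⊥ : IntermediateField K F) :=
  IsFractionRing.lift_fieldRange_eq_of_range_eq _ (gEmb_range K P)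

end Aux2

section Aux3

variable {K F : Type*} [Field K] [Field F] [Algebra K F] {N : ℕ}
variable (P : Ideal (MvPolynomial (Fin N) F)) [P.IsPrime]
variable (ψ : funcField P ≃+* RatFunc F)

lemma mapPsi_funcSubfield (hC : ∀ c : F, ψ (embConst P c) = RatFunc.C c)
    (hX : ∀ i : Fin N, ψ (clsX P i) ∈ ratSubfield (⊥ : IntermediateField K F))
    (ht : ψ.symm RatFunc.X ∈ funcSubfield P (⊥ : IntermediateField K F)) :
    Subfield.map (ψ : funcField P →+* RatFunc F) (funcSubfield P (⊥ : IntermediateField K F))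
      = ratSubfield (⊥ : IntermediateField K F) := by
  apply le_antisymm
  · rw [Subfield.map_le_iff_le_comap, funcSubfield, Subfield.closure_le]
    rintro x (⟨c, hc, rfl⟩ | ⟨i, rfl⟩)
    · refine Subfield.mem_comap.mpr ?_
      show ψ (embConst P c) ∈ ratSubfield (⊥ : IntermediateField K F)
      rw [hC]
      exact Subfield.subset_closure (Or.inl ⟨c, hc, rfl⟩)
    · exact Subfield.mem_comap.mpr (hX i)
  · rw [ratSubfield, Subfield.closure_le]
    rintro x (⟨c, hc, rfl⟩ | rfl)
    · exact ⟨embConst P c, Subfield.subset_closure (Or.inl ⟨c, hc, rfl⟩), hC c⟩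
    · exact ⟨ψ.symm RatFunc.X, ht, ψ.apply_symm_apply _⟩

lemma mapPsi_range (hC : ∀ c : F, ψ (embConst P c) = RatFunc.C c)
    (hX : ∀ i : Fin N, ψ (clsX P i) ∈ ratSubfield (⊥ : IntermediateField K F))
    (ht : ψ.symm RatFunc.X ∈ funcSubfield P (⊥ : IntermediateField K F)) :
    Subring.map (ψ : funcField P →+* RatFunc F) (jmap K P).range = (iotaRat K F).range := by
  apply SetLike.ext'
  have h1 : Set.range (jmap K P)
      = ((funcSubfield P (⊥ : IntermediateField K F) : Subfield _) : Set _) := by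
    rw [← jmap_fieldRange]
    exact (RingHom.coe_fieldRange _).symm
  calc (↑(Subring.map (ψ : funcField P →+* RatFunc F) (jmap K P).range) : Set (RatFunc F))
      = (ψ : funcField P →+* RatFunc F) '' (Set.range (jmap K P)) := by rw [Subring.coe_map, RingHom.coe_range]
    _ = (ψ : funcField P →+* RatFunc F) '' ↑(funcSubfield P (⊥ : IntermediateField K F)) := by rw [h1]
    _ = ↑(Subfield.map (ψ : funcField P →+* RatFunc F)
          (funcSubfield P (⊥ : IntermediateField K F))) := (Subfield.coe_map _ _).symm
    _ = ↑(ratSubfield (⊥ : IntermediateField K F)) := by rw [mapPsi_funcSubfield P ψ hC hX ht]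
    _ = ↑((iotaRat K F).fieldRange) := by rw [iotaRat_fieldRange]
    _ = Set.range (iotaRat K F) := RingHom.coe_fieldRange _

lemma part1 (hC : ∀ c : F, ψ (embConst P c) = RatFunc.C c)
    (hX : ∀ i : Fin N, ψ (clsX P i) ∈ ratSubfield (⊥ : IntermediateField K F))
    (ht : ψ.symm RatFunc.X ∈ funcSubfield P (⊥ : IntermediateField K F)) :
    ∃ φ : contractedFuncField K P ≃+* RatFunc K,
      ∀ c : K, φ (embConstContracted K P c) = RatFunc.C c := by
  let e1 : contractedFuncField K P ≃+* (jmap K P).range :=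
    RingEquiv.ofLeftInverse (Function.leftInverse_invFun (jmap K P).injective)
  let e2 := Subring.equivMapOfInjective (jmap K P).range
    (ψ : funcField P →+* RatFunc F) ψ.injective
  let e3 := RingEquiv.subringCongr (mapPsi_range P ψ hC hX ht)
  let e4 : RatFunc K ≃+* (iotaRat K F).range :=
    RingEquiv.ofLeftInverse (Function.leftInverse_invFun (iotaRat K F).injective)
  refine ⟨((e1.trans e2).trans e3).trans e4.symm, ?_⟩
  have key : ∀ x, iotaRat K F ((((e1.trans e2).trans e3).trans e4.symm) x)
      = ψ (jmap K P x) := by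
    intro x
    have h : e4 ((((e1.trans e2).trans e3).trans e4.symm) x) = e3 (e2 (e1 x)) :=
      RingEquiv.apply_symm_apply e4 _
    calc iotaRat K F ((((e1.trans e2).trans e3).trans e4.symm) x)
        = ↑(e4 ((((e1.trans e2).trans e3).trans e4.symm) x)) := rfl
      _ = ↑(e3 (e2 (e1 x))) := by rw [h]
      _ = ψ (jmap K P x) := rfl
  intro c
  apply iotaRat_injective (K := K) (F := F)
  rw [key, jmap_embConstContracted, hC, iotaRat_C]

end Aux3

section Aux4

variable {K F : Type*} [Field K] [Field F] [Algebra K F] {N : ℕ}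
variable (P : Ideal (MvPolynomial (Fin N) F)) [P.IsPrime]
variable (ψ : funcField P ≃+* RatFunc F)

/-- The parametrization map `F[x] → F(t)`. -/
noncomputable def theta : MvPolynomial (Fin N) F →+* RatFunc F :=
  (ψ : funcField P →+* RatFunc F).comp
    ((algebraMap (MvPolynomial (Fin N) F ⧸ P) (funcField P)).comp (Ideal.Quotient.mk P))

lemma theta_apply (f : MvPolynomial (Fin N) F) :
    theta P ψ f = ψ (algebraMap (MvPolynomial (Fin N) F ⧸ P) (funcField P)
      (Ideal.Quotient.mk P f)) := rfl

lemma theta_eq_zero_iff (f : MvPolynomial (Fin N) F) : theta P ψ f = 0 ↔ f ∈ P := by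
  have h1 : Function.Injective
      (⇑ψ ∘ ⇑(algebraMap (MvPolynomial (Fin N) F ⧸ P) (funcField P))) :=
    ψ.injective.comp (IsFractionRing.injective _ _)
  constructor
  · intro h
    have h0 : (⇑ψ ∘ ⇑(algebraMap (MvPolynomial (Fin N) F ⧸ P) (funcField P)))
        (Ideal.Quotient.mk P f)
        = (⇑ψ ∘ ⇑(algebraMap (MvPolynomial (Fin N) F ⧸ P) (funcField P))) 0 := by
      simpa [theta_apply, map_zero] using h
    have := h1 h0
    rwa [Ideal.Quotient.eq_zero_iff_mem] at this
  · intro h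
    rw [theta_apply, Ideal.Quotient.eq_zero_iff_mem.mpr h, map_zero, map_zero]

lemma theta_C (a : F) : theta P ψ (MvPolynomial.C a) = ψ (embConst P a) := rfl

lemma theta_X (i : Fin N) : theta P ψ (MvPolynomial.X i) = ψ (clsX P i) := rfl

lemma theta_coeffExt_mem (hC : ∀ c : F, ψ (embConst P c) = RatFunc.C c)
    (hX : ∀ i : Fin N, ψ (clsX P i) ∈ ratSubfield (⊥ : IntermediateField K F))
    (g : MvPolynomial (Fin N) K) :
    theta P ψ (coeffExt K F N g) ∈ (iotaRat K F).range := by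
  induction g using MvPolynomial.induction_on with
  | C k =>
    refine ⟨RatFunc.C k, ?_⟩
    rw [iotaRat_C, coeffExt, MvPolynomial.map_C, theta_C, hC]
  | add p q hp hq =>
    rw [map_add, map_add]; exact add_mem hp hq
  | mul_X p i hp =>
    rw [map_mul, map_mul]
    refine mul_mem hp ?_
    have hmem : ψ (clsX P i) ∈ (iotaRat K F).fieldRange := by
      rw [iotaRat_fieldRange]; exact hX i
    obtain ⟨y, hy⟩ := RingHom.mem_fieldRange.mp hmem
    rw [coeffExt, MvPolynomial.map_X, theta_X]
    exact ⟨y, hy⟩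

end Aux4

section Aux5

variable {K F : Type*} [Field K] [Field F] [Algebra K F]

lemma indep_lemma {ι : Type*} (e : ι → F) (he : LinearIndependent K e) (s : Finset ι)
    (g : ι → RatFunc K)
    (h : ∑ j ∈ s, RatFunc.C (e j) * iotaRat K F (g j) = 0) : ∀ j ∈ s, g j = 0 := by
  classical
  set q : Polynomial K := ∏ j ∈ s, (g j).denom with hqdef
  set p : ι → Polynomial K := fun j => (g j).num * ∏ j' ∈ s.erase j, (g j').denom with hpdef
  have hq : ∀ j ∈ s, g j * algebraMap (Polynomial K) (RatFunc K) q
      = algebraMap (Polynomial K) (RatFunc K) (p j) := by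
    intro j hj
    have hd : algebraMap (Polynomial K) (RatFunc K) ((g j).denom) ≠ 0 :=
      RatFunc.algebraMap_ne_zero (RatFunc.denom_ne_zero (g j))
    have hnum : g j * algebraMap (Polynomial K) (RatFunc K) ((g j).denom)
        = algebraMap (Polynomial K) (RatFunc K) ((g j).num) := by
      nth_rewrite 1 [← RatFunc.num_div_denom (g j)]
      rw [div_mul_cancel₀ _ hd]
    rw [hqdef, ← Finset.mul_prod_erase s _ hj, map_mul, ← mul_assoc, hnum, hpdef, map_mul]
  have h2 : ∑ j ∈ s, RatFunc.C (e j)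
      * iotaRat K F (algebraMap (Polynomial K) (RatFunc K) (p j)) = 0 := by
    calc ∑ j ∈ s, RatFunc.C (e j) * iotaRat K F (algebraMap (Polynomial K) (RatFunc K) (p j))
        = ∑ j ∈ s, (RatFunc.C (e j) * iotaRat K F (g j))
            * iotaRat K F (algebraMap (Polynomial K) (RatFunc K) q) :=
          Finset.sum_congr rfl (fun j hj => by rw [mul_assoc, ← map_mul, hq j hj])
      _ = (∑ j ∈ s, RatFunc.C (e j) * iotaRat K F (g j))
            * iotaRat K F (algebraMap (Polynomial K) (RatFunc K) q) := (Finset.sum_mul _ _ _).symm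
      _ = 0 := by rw [h, zero_mul]
  have h3 : ∑ j ∈ s, Polynomial.C (e j) * (p j).map (algebraMap K F) = 0 := by
    apply RatFunc.algebraMap_injective F
    rw [map_sum, map_zero]
    rw [← h2]
    refine Finset.sum_congr rfl (fun j hj => ?_)
    rw [map_mul, iotaRat_algebraMap, RatFunc.algebraMap_C]
  have h4 : ∀ j ∈ s, p j = 0 := by
    intro j hj
    ext n
    have h5 := congrArg (fun r => Polynomial.coeff r n) h3
    simp only [Polynomial.finset_sum_coeff, Polynomial.coeff_C_mul, Polynomial.coeff_map,
      Polynomial.coeff_zero] at h5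
    have h6 : ∑ j ∈ s, ((p j).coeff n) • e j = 0 := by
      rw [← h5]
      refine Finset.sum_congr rfl (fun j' _ => ?_)
      rw [Algebra.smul_def, mul_comm]
    exact linearIndependent_iff'.mp he s (fun j => (p j).coeff n) h6 j hj
  intro j hj
  have hpj := h4 j hj
  rw [hpdef] at hpj
  have hprod : (∏ j' ∈ s.erase j, (g j').denom) ≠ 0 :=
    Finset.prod_ne_zero_iff.mpr (fun j' _ => RatFunc.denom_ne_zero (g j'))
  rcases mul_eq_zero.mp hpj with hn | hp0
  · exact RatFunc.num_eq_zero_iff.mp hn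
  · exact absurd hp0 hprod

end Aux5

section Aux6

variable {K F : Type*} [Field K] [Field F] [Algebra K F] {N : ℕ}

lemma exists_decomp {ι : Type*} (b : Module.Basis ι K F) (f : MvPolynomial (Fin N) F) :
    ∃ (s : Finset ι) (fj : ι → MvPolynomial (Fin N) K),
      f = ∑ j ∈ s, MvPolynomial.C (b j) * coeffExt K F N (fj j) := by
  classical
  refine ⟨f.support.biUnion (fun m => (b.repr (MvPolynomial.coeff m f)).support),
    fun j => ∑ m ∈ f.support,
      MvPolynomial.monomial m ((b.repr (MvPolynomial.coeff m f)) j), ?_⟩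
  set s := f.support.biUnion (fun m => (b.repr (MvPolynomial.coeff m f)).support) with hs
  have calc1 : ∑ j ∈ s, MvPolynomial.C (b j) * coeffExt K F N
        (∑ m ∈ f.support, MvPolynomial.monomial m ((b.repr (MvPolynomial.coeff m f)) j))
      = ∑ j ∈ s, ∑ m ∈ f.support, MvPolynomial.C (b j)
          * MvPolynomial.monomial m (algebraMap K F ((b.repr (MvPolynomial.coeff m f)) j)) := by
    refine Finset.sum_congr rfl fun j _ => ?_
    rw [map_sum, Finset.mul_sum]
    refine Finset.sum_congr rfl fun m _ => ?_
    rw [coeffExt, MvPolynomial.map_monomial]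
  rw [calc1, Finset.sum_comm]
  have calc2 : ∀ m ∈ f.support,
      ∑ j ∈ s, MvPolynomial.C (b j)
          * MvPolynomial.monomial m (algebraMap K F ((b.repr (MvPolynomial.coeff m f)) j))
        = MvPolynomial.monomial m (MvPolynomial.coeff m f) := by
    intro m hm
    have step : ∀ j, MvPolynomial.C (b j)
        * MvPolynomial.monomial m (algebraMap K F ((b.repr (MvPolynomial.coeff m f)) j))
        = MvPolynomial.monomial m (((b.repr (MvPolynomial.coeff m f)) j) • b j) := by
      intro j
      rw [MvPolynomial.C_mul_monomial, Algebra.smul_def, mul_comm]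
    rw [Finset.sum_congr rfl (fun j _ => step j), ← map_sum]
    congr 1
    have hsub : (b.repr (MvPolynomial.coeff m f)).support ⊆ s :=
      by rw [hs]; exact Finset.subset_biUnion_of_mem (fun m => (b.repr (MvPolynomial.coeff m f)).support) hm
    have h1 := b.linearCombination_repr (MvPolynomial.coeff m f)
    rw [Finsupp.linearCombination_apply] at h1
    rw [Finsupp.sum_of_support_subset _ hsub _ (fun i _ => zero_smul K (b i))] at h1
    exact h1
  rw [Finset.sum_congr rfl calc2, MvPolynomial.support_sum_monomial_coeff]

end Aux6

/-- **Proposition.** Let `K` be a field of characteristic zero with algebraic closure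
`F` and let `P ⊆ F[x₁,…,x_N]` be a prime ideal. If `K` is a field of parametrization of
`P`, then `K(P)` is isomorphic to the rational function field `K(t)` by an isomorphism
that is the identity on `K`, and `K` is a field of definition of `P`. -/
theorem fieldOfParametrization_implies_fieldOfDefinition
    {K F : Type*} [Field K] [CharZero K] [Field F] [Algebra K F] [IsAlgClosure K F]
    {N : ℕ} (P : Ideal (MvPolynomial (Fin N) F)) [P.IsPrime]
    (hpar : IsFieldOfParametrization P (⊥ : IntermediateField K F)) :
    (∃ φ : contractedFuncField K P ≃+* RatFunc K,
      ∀ c : K, φ (embConstContracted K P c) = RatFunc.C c) ∧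
    IsFieldOfDefinition K P := by
  obtain ⟨ψ, hC, hX, ht⟩ := hpar
  constructor
  · exact part1 P ψ hC hX ht
  · show P = Ideal.map (coeffExt K F N) (Ideal.comap (coeffExt K F N) P)
    refine le_antisymm ?_ Ideal.map_comap_le
    intro f hf
    classical
    set b := Module.Basis.ofVectorSpace K F with hb
    obtain ⟨s, fj, hdecomp⟩ := exists_decomp b f
    have hθf : theta P ψ f = 0 := (theta_eq_zero_iff P ψ f).mpr hf
    let gsel : _ → RatFunc K := fun j =>
      if h : ∃ y, iotaRat K F y = theta P ψ (coeffExt K F N (fj j)) then h.choose else 0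
    have hg : ∀ j, iotaRat K F (gsel j) = theta P ψ (coeffExt K F N (fj j)) := by
      intro j
      obtain ⟨y, hy⟩ := RingHom.mem_range.mp (theta_coeffExt_mem P ψ hC hX (fj j))
      have hex : ∃ y, iotaRat K F y = theta P ψ (coeffExt K F N (fj j)) := ⟨y, hy⟩
      simp only [gsel, dif_pos hex]
      exact hex.choose_spec
    have hsum : ∑ j ∈ s, RatFunc.C (b j) * iotaRat K F (gsel j) = 0 := by
      calc ∑ j ∈ s, RatFunc.C (b j) * iotaRat K F (gsel j)
          = ∑ j ∈ s, theta P ψ (MvPolynomial.C (b j) * coeffExt K F N (fj j)) :=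
            Finset.sum_congr rfl fun j _ => by rw [hg j, map_mul, theta_C, hC]
        _ = theta P ψ f := by rw [← map_sum, ← hdecomp]
        _ = 0 := hθf
    have hzero := indep_lemma (⇑b) b.linearIndependent s gsel hsum
    rw [hdecomp]
    refine Ideal.sum_mem _ fun j hj => ?_
    have hθ0 : theta P ψ (coeffExt K F N (fj j)) = 0 := by
      rw [← hg j, hzero j hj, map_zero]
    have hmemP : coeffExt K F N (fj j) ∈ P := (theta_eq_zero_iff P ψ _).mp hθ0
    exact Ideal.mul_mem_left _ _ (Ideal.mem_map_of_mem _ (Ideal.mem_comap.mpr hmemP))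
end
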